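/- For the maximally correlated pair (X, Y) produced by the paper's correlated perturbation (the antitone coupling of the two LDP-FL marginals): Cov(X, Y) = −(w_i − (c − r·α(ε)))·(w_j − (c − r·α(ε))) if w_i + w_j ≤ 2c, and Cov(X, Y) = −(w_i − (c + r·α(ε)))·(w_j − (c + r·α(ε))) if w_i + w_j ≥ 2c. In particular Cov(X, Y) ≤ 0. -/

import Mathlib

open Real Set

/-- `α(ε) = (e^ε + 1)/(e^ε − 1)`. -/
noncomputable def alphaFn (ε : ℝ) : ℝ := (Real.exp ε + 1) / (Real.exp ε - 1)

/-- The LDP-FL marginal `P(output = c + rα(ε))` at input `u`. -/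
noncomputable def qOf (c r ε u : ℝ) : ℝ := 1 / 2 + (u - c) / (2 * r * alphaFn ε)

/-- The output level associated with a Boolean outcome: `true ↦ c + rα(ε)`, `false ↦ c − rα(ε)`. -/
noncomputable def valOf (c r ε : ℝ) (b : Bool) : ℝ :=
  if b then c + r * alphaFn ε else c - r * alphaFn ε

/-- The joint pmf of the maximally (negatively) correlated pair `(X, Y)` produced by the
paper's correlated perturbation (the antitone coupling of the two LDP-FL marginals
`P_A = qOf c r ε wi`, `P_B = qOf c r ε wj`); `true ↦ c + rα(ε)`, `false ↦ c − rα(ε)`. -/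
noncomputable def jpCor (c r ε wi wj : ℝ) (b b' : Bool) : ℝ :=
  if b then
    (if b' then max 0 (qOf c r ε wi + qOf c r ε wj - 1)
     else min (qOf c r ε wi) (1 - qOf c r ε wj))
  else
    (if b' then min (1 - qOf c r ε wi) (qOf c r ε wj)
     else max 0 (1 - qOf c r ε wi - qOf c r ε wj))

/-- `Cov(X, Y) = E[XY] − E[X]·E[Y]` for the maximally correlated pair. -/
noncomputable def covCor (c r ε wi wj : ℝ) : ℝ :=
  (∑ b : Bool, ∑ b' : Bool, jpCor c r ε wi wj b b' * valOf c r ε b * valOf c r ε b') -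
    (∑ b : Bool, ∑ b' : Bool, jpCor c r ε wi wj b b' * valOf c r ε b) *
      (∑ b : Bool, ∑ b' : Bool, jpCor c r ε wi wj b b' * valOf c r ε b') 

/-- for the maximally correlated pair `(X, Y)`,
`Cov(X, Y) = −(wi − (c − rα))(wj − (c − rα))` if `wi + wj ≤ 2c`, and
`Cov(X, Y) = −(wi − (c + rα))(wj − (c + rα))` if `wi + wj ≥ 2c`; in particular
`Cov(X, Y) ≤ 0`. -/
theorem stmt12 (c r ε : ℝ) (hr : 0 < r) (hε : 0 < ε)
    (wi wj : ℝ) (hwi : wi ∈ Icc (c - r) (c + r)) (hwj : wj ∈ Icc (c - r) (c + r)) :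
    (wi + wj ≤ 2 * c →
      covCor c r ε wi wj =
        -((wi - (c - r * alphaFn ε)) * (wj - (c - r * alphaFn ε)))) ∧
    (2 * c ≤ wi + wj →
      covCor c r ε wi wj =
        -((wi - (c + r * alphaFn ε)) * (wj - (c + r * alphaFn ε)))) ∧
    covCor c r ε wi wj ≤ 0 := by
  have he : (1 : ℝ) < Real.exp ε := by
    have := Real.add_one_lt_exp (ne_of_gt hε); linarith
  have hα : 1 < alphaFn ε := by
    unfold alphaFn
    rw [one_lt_div (by linarith)]; linarith
  have ha : 0 < r * alphaFn ε := mul_pos hr (by linarith)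
  have hra : r < r * alphaFn ε := by
    nlinarith
  have h2a : (0:ℝ) < 2 * r * alphaFn ε := by linarith
  obtain ⟨hwi1, hwi2⟩ := hwi
  obtain ⟨hwj1, hwj2⟩ := hwj
  have key1 : wi + wj ≤ 2 * c →
      covCor c r ε wi wj =
        -((wi - (c - r * alphaFn ε)) * (wj - (c - r * alphaFn ε))) := by
    intro h
    have hsum : (wi - c) / (2 * r * alphaFn ε) + (wj - c) / (2 * r * alphaFn ε) ≤ 0 := by
      rw [← add_div]
      apply div_nonpos_of_nonpos_of_nonneg <;> linarith
    have hpq : qOf c r ε wi + qOf c r ε wj - 1 ≤ 0 := by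
      unfold qOf; linarith
    have h1 : max 0 (qOf c r ε wi + qOf c r ε wj - 1) = 0 := max_eq_left hpq
    have h2 : min (qOf c r ε wi) (1 - qOf c r ε wj) = qOf c r ε wi :=
      min_eq_left (by linarith)
    have h3 : min (1 - qOf c r ε wi) (qOf c r ε wj) = qOf c r ε wj :=
      min_eq_right (by linarith)
    have h4 : max 0 (1 - qOf c r ε wi - qOf c r ε wj) = 1 - qOf c r ε wi - qOf c r ε wj :=
      max_eq_right (by linarith)
    unfold covCor jpCor valOf
    simp only [Fintype.sum_bool, if_true, if_false, Bool.cond_true, Bool.cond_false,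
      ite_true, ite_false, Bool.false_eq_true, h1, h2, h3, h4]
    unfold qOf
    field_simp
    ring
  have key2 : 2 * c ≤ wi + wj →
      covCor c r ε wi wj =
        -((wi - (c + r * alphaFn ε)) * (wj - (c + r * alphaFn ε))) := by
    intro h
    have hsum : 0 ≤ (wi - c) / (2 * r * alphaFn ε) + (wj - c) / (2 * r * alphaFn ε) := by
      rw [← add_div]
      apply div_nonneg <;> linarith
    have hpq : 0 ≤ qOf c r ε wi + qOf c r ε wj - 1 := by
      unfold qOf; linarith
    have h1 : max 0 (qOf c r ε wi + qOf c r ε wj - 1) = qOf c r ε wi + qOf c r ε wj - 1 :=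
      max_eq_right hpq
    have h2 : min (qOf c r ε wi) (1 - qOf c r ε wj) = 1 - qOf c r ε wj :=
      min_eq_right (by linarith)
    have h3 : min (1 - qOf c r ε wi) (qOf c r ε wj) = 1 - qOf c r ε wi :=
      min_eq_left (by linarith)
    have h4 : max 0 (1 - qOf c r ε wi - qOf c r ε wj) = 0 :=
      max_eq_left (by linarith)
    unfold covCor jpCor valOf
    simp only [Fintype.sum_bool, if_true, if_false, ite_true, ite_false, Bool.false_eq_true, h1, h2, h3, h4]
    unfold qOf
    field_simp
    ring
  refine ⟨key1, key2, ?_⟩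
  rcases le_total (wi + wj) (2 * c) with h | h
  · rw [key1 h]
    have : 0 ≤ (wi - (c - r * alphaFn ε)) * (wj - (c - r * alphaFn ε)) :=
      mul_nonneg (by linarith) (by linarith)
    linarith
  · rw [key2 h]
    nlinarith [mul_nonneg (by linarith : (0:ℝ) ≤ (c + r * alphaFn ε) - wi)
      (by linarith : (0:ℝ) ≤ (c + r * alphaFn ε) - wj)]
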